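/- Let {v₀, …, v_k} be linearly independent vectors in a finite-dimensional real inner product space V with ⟨vᵢ, vⱼ⟩ ≤ 0 for all 0 ≤ i < j ≤ k, and let u ∈ V satisfy ⟨vᵢ, u⟩ ≤ 0 for all 0 ≤ i ≤ k. Let pr(v₀) denote the orthogonal projection of v₀ onto the orthogonal complement of span{vᵢ − vⱼ : 0 ≤ i, j ≤ k}. Then ⟨pr(v₀), vᵢ − u⟩ > 0 for all 0 ≤ i ≤ k. -/

import Mathlib

open RealInnerProductSpace

theorem nonneg_coeff_of_obtuse
    {V : Type*} [NormedAddCommGroup V] [InnerProductSpace ℝ V]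
    {n : ℕ} (v : Fin n → V) (hli : LinearIndependent ℝ v)
    (hneg : ∀ i j, i ≠ j → ⟪v i, v j⟫ ≤ 0) (c : Fin n → ℝ)
    (hx : ∀ j, 0 ≤ ⟪∑ i, c i • v i, v j⟫) : ∀ i, 0 ≤ c i := by
  set cp : Fin n → ℝ := fun i => max (c i) 0 with hcp
  set cn : Fin n → ℝ := fun i => max (-c i) 0 with hcn
  have hcpn : ∀ i, c i = cp i - cn i := by
    intro i
    simp only [hcp, hcn]
    rcases le_total (c i) 0 with h | h
    · rw [max_eq_right h, max_eq_left (by linarith)]; ring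
    · rw [max_eq_left h, max_eq_right (by linarith)]; ring
  have hcp0 : ∀ i, 0 ≤ cp i := fun i => le_max_right _ _
  have hcn0 : ∀ i, 0 ≤ cn i := fun i => le_max_right _ _
  have hmul0 : ∀ i, cp i * cn i = 0 := by
    intro i
    rcases le_total (c i) 0 with h | h
    · simp only [hcp, hcn]; rw [max_eq_right h]; ring
    · simp only [hcp, hcn]; rw [max_eq_right (by linarith : -c i ≤ 0)]; ring
  set xm : V := ∑ i, cn i • v i with hxm
  have hsplit : (∑ i, cp i • v i) - (∑ i, c i • v i) = xm := by
    rw [hxm, ← Finset.sum_sub_distrib]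
    refine Finset.sum_congr rfl fun i _ => ?_
    rw [hcpn i, sub_smul]; abel
  have h1 : ⟪∑ i, cp i • v i, xm⟫ ≤ 0 := by
    rw [hxm, inner_sum]
    simp_rw [real_inner_smul_right, sum_inner, real_inner_smul_left, Finset.mul_sum]
    refine Finset.sum_nonpos fun j _ => Finset.sum_nonpos fun i _ => ?_
    by_cases h : i = j
    · subst h; rw [← mul_assoc, mul_comm (cn i), hmul0 i, zero_mul]
    · have h2 : cp i * ⟪v i, v j⟫ ≤ 0 :=
        mul_nonpos_of_nonneg_of_nonpos (hcp0 i) (hneg i j h)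
      exact mul_nonpos_of_nonneg_of_nonpos (hcn0 j) h2
  have h2 : 0 ≤ ⟪∑ i, c i • v i, xm⟫ := by
    rw [hxm, inner_sum]
    simp_rw [real_inner_smul_right]
    exact Finset.sum_nonneg fun j _ => mul_nonneg (hcn0 j) (hx j)
  have hxm0 : xm = 0 := by
    have : ⟪xm, xm⟫ ≤ 0 := by
      calc ⟪xm, xm⟫ = ⟪(∑ i, cp i • v i) - (∑ i, c i • v i), xm⟫ := by rw [hsplit]
        _ = ⟪∑ i, cp i • v i, xm⟫ - ⟪∑ i, c i • v i, xm⟫ := by rw [inner_sub_left]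
        _ ≤ 0 := by linarith
    exact real_inner_self_nonpos.mp this
  have hcnz : ∀ i, cn i = 0 := by
    have := Fintype.linearIndependent_iff.mp hli cn (by rw [← hxm, hxm0])
    exact this
  intro i
  have : max (-c i) 0 = 0 := hcnz i
  have : -c i ≤ 0 := by
    by_contra h
    push_neg at h
    rw [max_eq_left h.le] at this
    linarith
  linarith

/-- Lemma `boundary`: if `v₀,…,v_k` are linearly independent with pairwise nonpositive
inner products and `u` has nonpositive inner product with each `vᵢ`, then the orthogonal
projection of `v₀` onto the orthogonal complement of the span of the differences `vᵢ − vⱼ`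
has strictly positive inner product with each `vᵢ − u`. -/
theorem boundary_projection_pos
    {V : Type*} [NormedAddCommGroup V] [InnerProductSpace ℝ V] [FiniteDimensional ℝ V]
    {k : ℕ} (v : Fin (k + 1) → V)
    (hli : LinearIndependent ℝ v)
    (hneg : ∀ i j, i < j → ⟪v i, v j⟫ ≤ 0)
    (u : V) (hu : ∀ i, ⟪v i, u⟫ ≤ 0) :
    ∀ i, 0 < ⟪(Submodule.orthogonalProjectionOnto
        ((Submodule.span ℝ
          (Set.range fun p : Fin (k + 1) × Fin (k + 1) => v p.1 - v p.2))ᗮ) (v 0) : V),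
      v i - u⟫ := by
  set K : Submodule ℝ V := Submodule.span ℝ
      (Set.range fun p : Fin (k + 1) × Fin (k + 1) => v p.1 - v p.2) with hK
  set p : V := (Submodule.orthogonalProjectionOnto Kᗮ (v 0) : V) with hp
  have hpK : p ∈ Kᗮ := SetLike.coe_mem _
  have hsub : v 0 - p ∈ K := by
    have h := Submodule.sub_starProjection_mem_orthogonal (K := Kᗮ) (v 0)
    rwa [Submodule.orthogonal_orthogonal] at h
  -- differences are in K
  have hdiff : ∀ i j : Fin (k + 1), v i - v j ∈ K :=
    fun i j => Submodule.subset_span ⟨(i, j), rfl⟩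
  -- ⟪p, v i⟫ = ‖p‖ ^ 2
  have hinner : ∀ i, ⟪p, v i⟫ = ‖p‖ ^ 2 := by
    intro i
    have h0 : ⟪v 0 - p, p⟫ = 0 :=
      (Submodule.mem_orthogonal K p).mp hpK _ hsub
    have h1 : ⟪v i - v 0, p⟫ = 0 :=
      (Submodule.mem_orthogonal K p).mp hpK _ (hdiff i 0)
    have : ⟪v i - p, p⟫ = 0 := by
      have : v i - p = (v i - v 0) + (v 0 - p) := by abel
      rw [this, inner_add_left, h0, h1, add_zero]
    have h2 : ⟪v i, p⟫ - ⟪p, p⟫ = 0 := by rwa [inner_sub_left] at this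
    rw [real_inner_comm]
    rw [← real_inner_self_eq_norm_sq p]
    linarith
  -- p is in the span of the v i
  have hp_span : p ∈ Submodule.span ℝ (Set.range v) := by
    have hKle : K ≤ Submodule.span ℝ (Set.range v) := by
      rw [hK, Submodule.span_le]
      rintro x ⟨⟨i, j⟩, rfl⟩
      exact Submodule.sub_mem _ (Submodule.subset_span ⟨i, rfl⟩)
        (Submodule.subset_span ⟨j, rfl⟩)
    have h0 : v 0 ∈ Submodule.span ℝ (Set.range v) := Submodule.subset_span ⟨0, rfl⟩
    have : p = v 0 - (v 0 - p) := by abel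
    rw [this]
    exact Submodule.sub_mem _ h0 (hKle hsub)
  obtain ⟨c, hc⟩ := (Submodule.mem_span_range_iff_exists_fun ℝ).mp hp_span
  have hneg' : ∀ i j, i ≠ j → ⟪v i, v j⟫ ≤ 0 := by
    intro i j h
    rcases lt_or_gt_of_ne h with h | h
    · exact hneg i j h
    · rw [real_inner_comm]; exact hneg j i h
  have hcnn : ∀ i, 0 ≤ c i := by
    refine nonneg_coeff_of_obtuse v hli hneg' c fun j => ?_
    rw [hc, hinner j]
    positivity
  have hpu : ⟪p, u⟫ ≤ 0 := by
    rw [← hc, sum_inner]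
    simp_rw [real_inner_smul_left]
    exact Finset.sum_nonpos fun i _ =>
      mul_nonpos_of_nonneg_of_nonpos (hcnn i) (hu i)
  have hpne : p ≠ 0 := by
    intro h0
    have hv0K : v 0 ∈ K := by rw [h0, sub_zero] at hsub; exact hsub
    set d : Fin (k + 1) → V := fun i => v i - v 0 with hd
    have hKd : K ≤ Submodule.span ℝ (Set.range d) := by
      rw [hK, Submodule.span_le]
      rintro x ⟨⟨i, j⟩, rfl⟩
      show v i - v j ∈ Submodule.span ℝ (Set.range d)
      have hij : v i - v j = d i - d j := by simp only [hd]; abel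
      rw [hij]
      exact Submodule.sub_mem _ (Submodule.subset_span ⟨i, rfl⟩)
        (Submodule.subset_span ⟨j, rfl⟩)
    obtain ⟨e, he⟩ := (Submodule.mem_span_range_iff_exists_fun ℝ).mp (hKd hv0K)
    have he' : (∑ i, e i • v i) - (∑ j, e j) • v 0 = v 0 := by
      calc (∑ i, e i • v i) - (∑ j, e j) • v 0
          = ∑ i, (e i • v i - e i • v 0) := by
            rw [Finset.sum_smul, ← Finset.sum_sub_distrib]
        _ = ∑ i, e i • d i := by
            refine Finset.sum_congr rfl fun i _ => ?_
            simp only [hd, smul_sub]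
        _ = v 0 := he
    have key : ∑ i, (e i - (if i = 0 then 1 + ∑ j, e j else 0)) • v i = 0 := by
      simp_rw [sub_smul, ite_smul, zero_smul]
      rw [Finset.sum_sub_distrib, Finset.sum_ite_eq' Finset.univ (0 : Fin (k + 1))]
      simp only [Finset.mem_univ, if_true, add_smul, one_smul]
      rw [sub_eq_zero]
      rw [sub_eq_iff_eq_add] at he'
      exact he'
    have hz := Fintype.linearIndependent_iff.mp hli _ key
    have hez : ∀ i, i ≠ 0 → e i = 0 := by
      intro i hi
      have := hz i
      rw [if_neg hi, sub_zero] at this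
      exact this
    have hsum : ∑ j, e j = e 0 := by
      rw [Finset.sum_eq_single 0 (fun j _ hj => hez j hj) (by simp)]
    have h0' := hz 0
    rw [if_pos rfl, hsum] at h0'
    linarith
  intro i
  have hfinal : ⟪p, v i - u⟫ = ‖p‖ ^ 2 - ⟪p, u⟫ := by
    rw [inner_sub_right, hinner i]
  rw [← hp] at *
  rw [hfinal]
  have hnorm : 0 < ‖p‖ ^ 2 := pow_pos (norm_pos_iff.mpr hpne) 2
  linarith
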